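/- arXiv:1401.5543 — 2 statements merged into one kernel-verified Lean document; each statement's English description precedes it below -/
import Mathlib

section
/- Let N ≥ 2 and let α, γ be real numbers with α > 0 and α ≤ γ < N·α. Define f : ℝ → ℝ by f(x) = ((2·χ(t(x)) + 1)/(χ(t(x))·(χ(t(x)) + 1)))·(α − x) − (1/(χ(t(x))·(χ(t(x)) + 1)))·(γ − N·x) + x/N, where t(x) = (γ − N·x)/(α − x). Then f is continuous and monotone nondecreasing on the interval [max(0, γ − (N−1)·α), (γ − α)/(N−1)]. -/
open Classical in
/-- `χ(x) = x − 1` if `x` is an integer with `x ≥ 2`, and `χ(x) = ⌊x⌋` otherwise. -/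
noncomputable def chi (x : ℝ) : ℝ :=
  if (∃ n : ℤ, x = (n : ℝ)) ∧ 2 ≤ x then x - 1 else (⌊x⌋ : ℝ)


noncomputable def Lfun (N : ℕ) (α γ : ℝ) (k : ℕ) (x : ℝ) : ℝ :=
  ((2 * (k:ℝ) + 1) / ((k:ℝ) * ((k:ℝ) + 1))) * (α - x)
    - (1 / ((k:ℝ) * ((k:ℝ) + 1))) * (γ - (N : ℝ) * x) + x / (N : ℝ)

lemma Lfun_continuous (N : ℕ) (α γ : ℝ) (k : ℕ) : Continuous (Lfun N α γ k) := by
  unfold Lfun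
  fun_prop

lemma Lfun_mono (N : ℕ) (hN : 2 ≤ N) (α γ : ℝ) (k : ℕ) (hk1 : 1 ≤ k) (hk2 : k ≤ N - 1) :
    Monotone (Lfun N α γ k) := by
  intro x y hxy
  have hK : (1:ℝ) ≤ (k:ℝ) := by exact_mod_cast hk1
  have hNr : (2:ℝ) ≤ (N:ℝ) := by exact_mod_cast hN
  have hkN : k + 1 ≤ N := by omega
  have hKN : (k:ℝ) + 1 ≤ (N:ℝ) := by exact_mod_cast hkN
  have hKpos : (0:ℝ) < (k:ℝ) * ((k:ℝ)+1) := by positivity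
  have hNpos : (0:ℝ) < (N:ℝ) := by linarith
  have key : Lfun N α γ k y - Lfun N α γ k x
      = (y - x) * (((N:ℝ) - (k:ℝ)) * ((N:ℝ) - (k:ℝ) - 1) / ((k:ℝ) * ((k:ℝ)+1) * (N:ℝ))) := by
    unfold Lfun
    field_simp
    ring
  have hS : 0 ≤ ((N:ℝ) - (k:ℝ)) * ((N:ℝ) - (k:ℝ) - 1) / ((k:ℝ) * ((k:ℝ)+1) * (N:ℝ)) := by
    apply div_nonneg
    · apply mul_nonneg <;> linarith
    · positivity
  nlinarith [mul_nonneg (sub_nonneg.2 hxy) hS]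

lemma aux_key (k m : ℕ) (s : ℝ) (hk : 1 ≤ k) (hm : 1 ≤ m)
    (h1 : (m:ℝ) ≤ s) (h2 : s ≤ (m:ℝ) + 1) :
    (2*(k:ℝ)+1-s) / ((k:ℝ)*((k:ℝ)+1)) ≤ (2*(m:ℝ)+1-s) / ((m:ℝ)*((m:ℝ)+1)) := by
  have hk' : (1:ℝ) ≤ (k:ℝ) := by exact_mod_cast hk
  have hm' : (1:ℝ) ≤ (m:ℝ) := by exact_mod_cast hm
  rw [div_le_div_iff₀ (by positivity) (by positivity)]
  rcases lt_trichotomy k m with h | h | h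
  · -- k < m, so k + 1 ≤ m
    have h' : (k:ℝ) + 1 ≤ (m:ℝ) := by exact_mod_cast h
    nlinarith [mul_nonneg (mul_nonneg (by linarith : (0:ℝ) ≤ (m:ℝ) - (k:ℝ))
        (by linarith : (0:ℝ) ≤ s - (m:ℝ))) (by linarith : (0:ℝ) ≤ (k:ℝ) + (m:ℝ) + 1),
      mul_nonneg (mul_nonneg (by linarith : (0:ℝ) ≤ (m:ℝ) + 1)
        (by linarith : (0:ℝ) ≤ (m:ℝ) - (k:ℝ))) (by linarith : (0:ℝ) ≤ (m:ℝ) - 1 - (k:ℝ))]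
  · subst h; exact le_rfl
  · -- m < k, so m + 1 ≤ k
    have h' : (m:ℝ) + 1 ≤ (k:ℝ) := by exact_mod_cast h
    nlinarith [mul_nonneg (mul_nonneg (by linarith : (0:ℝ) ≤ (k:ℝ) - (m:ℝ))
        (by linarith : (0:ℝ) ≤ (m:ℝ) + 1 - s)) (by linarith : (0:ℝ) ≤ (k:ℝ) + (m:ℝ) + 1),
      mul_nonneg (mul_nonneg (by linarith : (0:ℝ) ≤ (m:ℝ))
        (by linarith : (0:ℝ) ≤ (k:ℝ) - (m:ℝ))) (by linarith : (0:ℝ) ≤ (k:ℝ) - (m:ℝ) - 1)]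

lemma chi_spec (s : ℝ) (hs : 1 ≤ s) :
    ∃ m : ℕ, 1 ≤ m ∧ chi s = (m:ℝ) ∧ (m:ℝ) ≤ s ∧ s ≤ (m:ℝ) + 1 := by
  unfold chi
  split_ifs with h
  · obtain ⟨⟨n, rfl⟩, h2⟩ := h
    have hn2 : 2 ≤ n := by exact_mod_cast h2
    have hc0 : ((n-1).toNat : ℤ) = n - 1 := Int.toNat_of_nonneg (by omega)
    have hc : (((n-1).toNat : ℕ) : ℝ) = (n:ℝ) - 1 := by exact_mod_cast hc0
    exact ⟨(n-1).toNat, by omega, by rw [hc], by rw [hc]; linarith, by rw [hc]; linarith⟩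
  · have hfl : (1:ℤ) ≤ ⌊s⌋ := by
      rw [Int.le_floor]; exact_mod_cast hs
    have hc0 : (⌊s⌋.toNat : ℤ) = ⌊s⌋ := Int.toNat_of_nonneg (by omega)
    have hc : ((⌊s⌋.toNat : ℕ) : ℝ) = ((⌊s⌋ : ℤ) : ℝ) := by exact_mod_cast hc0
    exact ⟨⌊s⌋.toNat, by omega, by rw [hc], by rw [hc]; exact Int.floor_le s,
      by rw [hc]; exact le_of_lt (Int.lt_floor_add_one s)⟩

lemma cont_sup' (F : Finset ℕ) (hF : F.Nonempty) (L : ℕ → ℝ → ℝ)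
    (hL : ∀ k, Continuous (L k)) :
    Continuous (fun x => F.sup' hF (fun k => L k x)) := by
  induction hF using Finset.Nonempty.cons_induction with
  | singleton a => simp only [Finset.sup'_singleton]; exact hL a
  | cons a F ha hF ih =>
      simp only [Finset.sup'_cons, hF]
      exact (hL a).max ih


/-- The function `f i` of the proof of Theorem 2 is continuous and nondecreasing on
the interval `[max(0, γ − (N−1)α), (γ − α)/(N−1)]`. -/
theorem f_continuous_monotone (N : ℕ) (hN : 2 ≤ N) (α γ : ℝ)
    (hα : 0 < α) (h1 : α ≤ γ) (h2 : γ < (N : ℝ) * α)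
    (t f : ℝ → ℝ)
    (ht : ∀ x, t x = (γ - (N : ℝ) * x) / (α - x))
    (hf : ∀ x, f x = ((2 * chi (t x) + 1) / (chi (t x) * (chi (t x) + 1))) * (α - x)
        - (1 / (chi (t x) * (chi (t x) + 1))) * (γ - (N : ℝ) * x) + x / (N : ℝ)) :
    ContinuousOn f (Set.Icc (max 0 (γ - ((N : ℝ) - 1) * α)) ((γ - α) / ((N : ℝ) - 1))) ∧
    MonotoneOn f (Set.Icc (max 0 (γ - ((N : ℝ) - 1) * α)) ((γ - α) / ((N : ℝ) - 1))) := by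
  have hNr : (2:ℝ) ≤ (N:ℝ) := by exact_mod_cast hN
  have hN1 : (0:ℝ) < (N:ℝ) - 1 := by linarith
  have hne : (Finset.Icc 1 (N-1)).Nonempty := ⟨1, by simp; omega⟩
  set g : ℝ → ℝ := fun x => (Finset.Icc 1 (N-1)).sup' hne (fun k => Lfun N α γ k x) with hg
  -- pointwise equality on the interval
  have heq : ∀ x ∈ Set.Icc (max 0 (γ - ((N : ℝ) - 1) * α)) ((γ - α) / ((N : ℝ) - 1)),
      f x = g x := by
    rintro x ⟨hxa, hxb⟩
    have hxa' : γ - ((N:ℝ) - 1) * α ≤ x := le_trans (le_max_right _ _) hxa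
    have hxb' : x * ((N:ℝ) - 1) ≤ γ - α := (le_div_iff₀ hN1).mp hxb
    have hxα : x < α := by nlinarith
    have hax : (0:ℝ) < α - x := by linarith
    have h_eq : γ - (N:ℝ) * x = t x * (α - x) := by
      rw [ht x, div_mul_cancel₀ _ (ne_of_gt hax)]
    have hs1 : 1 ≤ t x := by
      rw [ht x, le_div_iff₀ hax]; nlinarith
    have hsN : t x ≤ (N:ℝ) - 1 := by
      rw [ht x, div_le_iff₀ hax]; nlinarith
    obtain ⟨m, hm1, hchi, hms, hsm⟩ := chi_spec (t x) hs1
    have hmN : m ≤ N - 1 := by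
      have hr : (m:ℝ) ≤ (N:ℝ) - 1 := le_trans hms hsN
      have : (m:ℝ) + 1 ≤ (N:ℝ) := by linarith
      have : m + 1 ≤ N := by exact_mod_cast this
      omega
    have hfm : f x = Lfun N α γ m x := by
      rw [hf x, hchi]; rfl
    -- reformulation of Lfun using s = t x
    have hform : ∀ j : ℕ, 1 ≤ j →
        Lfun N α γ j x = ((2*(j:ℝ)+1 - t x) / ((j:ℝ)*((j:ℝ)+1))) * (α - x) + x / (N:ℝ) := by
      intro j hj
      have hj' : (1:ℝ) ≤ (j:ℝ) := by exact_mod_cast hj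
      have hjne : (j:ℝ)*((j:ℝ)+1) ≠ 0 := by positivity
      have hkey : (2*(j:ℝ)+1)/((j:ℝ)*((j:ℝ)+1)) * (α-x) - 1/((j:ℝ)*((j:ℝ)+1)) * (t x*(α-x))
          = ((2*(j:ℝ)+1 - t x) / ((j:ℝ)*((j:ℝ)+1))) * (α - x) := by
        field_simp
      rw [Lfun, h_eq]
      linarith [hkey]
    rw [hfm, hg]
    apply le_antisymm
    · exact Finset.le_sup' (fun k => Lfun N α γ k x) (Finset.mem_Icc.mpr ⟨hm1, hmN⟩)
    · apply Finset.sup'_le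
      intro k hk
      obtain ⟨hk1, hk2⟩ := Finset.mem_Icc.mp hk
      rw [hform k hk1, hform m hm1]
      have hkey := aux_key k m (t x) hk1 hm1 hms hsm
      have := mul_le_mul_of_nonneg_right hkey (le_of_lt hax)
      linarith
  have hgcont : Continuous g := by
    rw [hg]
    exact cont_sup' _ hne _ (fun k => Lfun_continuous N α γ k)
  have hgmono : Monotone g := by
    intro x y hxy
    rw [hg]
    apply Finset.sup'_le
    intro k hk
    obtain ⟨hk1, hk2⟩ := Finset.mem_Icc.mp hk
    exact le_trans (Lfun_mono N hN α γ k hk1 hk2 hxy)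
      (Finset.le_sup' (fun j => Lfun N α γ j y) hk)
  constructor
  · exact (hgcont.continuousOn).congr heq
  · intro x hx y hy hxy
    rw [heq x hx, heq y hy]
    exact hgmono hxy
end

section
/- (Value of the relaxed LP defining the new analytical bound) Let N ≥ 2 and let α_1,…,α_N, γ_1,…,γ_N be real numbers with α_i > 0 and α_i ≤ γ_i ≤ N·α_i for all i. Let δ = max(0, max_i (γ_i − (N−1)α_i)), and assume δ < α_i and δ ≤ (γ_i − α_i)/(N−1) for all i. Set α_i' = α_i − δ and γ_i' = γ_i − N·δ. Then the minimum of Σ_{i=1}^N Σ_{k=1}^N a_i(k)/k over all real numbers a_i(k) ≥ 0 (i, k ∈ {1,…,N}) satisfying Σ_{k=1}^N a_i(k) = α_i and Σ_{k=1}^N k·a_i(k) = γ_i for all i, together with a_1(N) = a_2(N) = ⋯ = a_N(N), is attained and equals δ + Σ_{i=1}^N [ 1/χ(γ_i'/α_i') − (γ_i'/α_i' − χ(γ_i'/α_i')) / ((1 + χ(γ_i'/α_i'))·χ(γ_i'/α_i')) ] · α_i'. -/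
lemma chi_spec_s19 (x : ℝ) (hx : 1 ≤ x) :
    ∃ n : ℕ, chi x = (n : ℝ) ∧ 1 ≤ n ∧ (n : ℝ) ≤ x ∧ x ≤ (n : ℝ) + 1 := by
  unfold chi
  split_ifs with h
  · obtain ⟨⟨k, hk⟩, h2⟩ := h
    have hk2 : (2:ℤ) ≤ k := by rw [hk] at h2; exact_mod_cast h2
    have h3 : ((k-1).toNat : ℤ) = k - 1 := by omega
    have hc : (((k-1).toNat : ℕ) : ℝ) = (k : ℝ) - 1 := by
      exact_mod_cast congrArg (fun z : ℤ => (z:ℝ)) h3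
    refine ⟨(k-1).toNat, by rw [hk, hc], by omega, by rw [hk, hc]; linarith, by rw [hk, hc]; linarith⟩
  · have hf : (1:ℤ) ≤ ⌊x⌋ := Int.le_floor.mpr (by exact_mod_cast hx)
    have h3 : (⌊x⌋.toNat : ℤ) = ⌊x⌋ := by omega
    have hc : ((⌊x⌋.toNat : ℕ) : ℝ) = (⌊x⌋ : ℝ) := by
      exact_mod_cast congrArg (fun z : ℤ => (z:ℝ)) h3
    exact ⟨⌊x⌋.toNat, by rw [hc], by omega, by rw [hc]; exact Int.floor_le x,
      by rw [hc]; exact (Int.lt_floor_add_one x).le⟩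

lemma key_ineq (m k : ℕ) (hm : 1 ≤ m) (hk : 1 ≤ k) :
    (1/(m:ℝ) + 1/((m:ℝ)+1)) + (-(1/((m:ℝ)*((m:ℝ)+1)))) * k ≤ 1/(k:ℝ) := by
  have hm0 : (0:ℝ) < m := by exact_mod_cast hm
  have hk0 : (0:ℝ) < k := by exact_mod_cast hk
  have hfac : 0 ≤ ((k:ℝ) - m) * ((k:ℝ) - ((m:ℝ)+1)) := by
    rcases le_or_gt k m with h | h
    · have h' : (k:ℝ) ≤ m := by exact_mod_cast h
      nlinarith
    · have h' : (m:ℝ) + 1 ≤ k := by exact_mod_cast h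
      nlinarith
  have h1 : 1/(k:ℝ) - ((1/(m:ℝ) + 1/((m:ℝ)+1)) + (-(1/((m:ℝ)*((m:ℝ)+1)))) * k)
      = ((k:ℝ)-m)*((k:ℝ)-((m:ℝ)+1)) / ((k:ℝ)*(m:ℝ)*((m:ℝ)+1)) := by
    field_simp; ring
  have h2 := div_nonneg hfac (by positivity : (0:ℝ) ≤ (k:ℝ)*(m:ℝ)*((m:ℝ)+1))
  linarith [h1 ▸ h2]

/-- Value of the relaxed LP defining the new analytical bound: the minimum of
`∑ i ∑ k, a i k / k` subject to the row constraints and `a 1 N = ⋯ = a N N`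
is attained and equals the YAT expression. -/
theorem relaxed_lp_value (N : ℕ) (hN : 2 ≤ N) (α γ : Fin N → ℝ)
    (hαpos : ∀ i, 0 < α i) (h1 : ∀ i, α i ≤ γ i) (h2 : ∀ i, γ i ≤ (N : ℝ) * α i)
    (δ : ℝ)
    (hδ : δ = max 0 (Finset.univ.sup' (Finset.univ_nonempty_iff.mpr ⟨⟨0, by omega⟩⟩)
        (fun i => γ i - ((N : ℝ) - 1) * α i)))
    (hδα : ∀ i, δ < α i) (hδβ : ∀ i, δ ≤ (γ i - α i) / ((N : ℝ) - 1))
    (α' γ' : Fin N → ℝ)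
    (hα' : ∀ i, α' i = α i - δ) (hγ' : ∀ i, γ' i = γ i - (N : ℝ) * δ) :
    IsLeast {v : ℝ | ∃ a : Fin N → ℕ → ℝ,
        (∀ i : Fin N, ∀ k ∈ Finset.Icc 1 N, 0 ≤ a i k) ∧
        (∀ i : Fin N, ∑ k ∈ Finset.Icc 1 N, a i k = α i) ∧
        (∀ i : Fin N, ∑ k ∈ Finset.Icc 1 N, (k : ℝ) * a i k = γ i) ∧
        (∀ i j : Fin N, a i N = a j N) ∧
        v = ∑ i : Fin N, ∑ k ∈ Finset.Icc 1 N, a i k / (k : ℝ)}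
      (δ + ∑ i : Fin N, (1 / chi (γ' i / α' i) -
        (γ' i / α' i - chi (γ' i / α' i)) /
          ((1 + chi (γ' i / α' i)) * chi (γ' i / α' i))) * α' i) := by
  have hNR : (2:ℝ) ≤ (N:ℝ) := by exact_mod_cast hN
  have hδ0 : 0 ≤ δ := hδ ▸ le_max_left _ _
  have hδi : ∀ i, γ i - ((N:ℝ)-1) * α i ≤ δ := by
    intro i; rw [hδ]
    exact le_trans (Finset.le_sup' (fun i => γ i - ((N:ℝ)-1) * α i) (Finset.mem_univ i)) (le_max_right _ _)
  have hα'pos : ∀ i, 0 < α' i := fun i => by rw [hα' i]; linarith [hδα i]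
  have hr1 : ∀ i, 1 ≤ γ' i / α' i := by
    intro i
    rw [le_div_iff₀ (hα'pos i), one_mul, hα' i, hγ' i]
    have h3 := hδβ i
    have hN1 : (0:ℝ) < (N:ℝ) - 1 := by linarith
    rw [le_div_iff₀ hN1] at h3
    nlinarith
  have hrN : ∀ i, γ' i / α' i ≤ (N:ℝ) - 1 := by
    intro i
    rw [div_le_iff₀ (hα'pos i), hα' i, hγ' i]
    have h3 := hδi i
    nlinarith
  choose m hm hm1 hmr hrm using fun i => chi_spec_s19 (γ' i / α' i) (hr1 i)
  have hmpos : ∀ i, (0:ℝ) < (m i : ℝ) := by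
    intro i; exact_mod_cast Nat.lt_of_lt_of_le Nat.zero_lt_one (hm1 i)
  have hmN : ∀ i, m i + 1 ≤ N := by
    intro i
    have : (m i : ℝ) ≤ (N:ℝ) - 1 := le_trans (hmr i) (hrN i)
    have : (m i : ℝ) + 1 ≤ (N:ℝ) := by linarith
    exact_mod_cast this
  have hNpos : (0:ℝ) < (N:ℝ) := by linarith
  -- abbreviations
  set L : Fin N → ℝ := fun i => 1/(m i:ℝ) + 1/((m i:ℝ)+1) with hL
  set Mu : Fin N → ℝ := fun i => -(1/((m i:ℝ)*((m i:ℝ)+1))) with hMu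
  -- the coefficient rewriting
  have hcoeff : ∀ i, (1 / chi (γ' i / α' i) -
      (γ' i / α' i - chi (γ' i / α' i)) /
        ((1 + chi (γ' i / α' i)) * chi (γ' i / α' i))) * α' i
      = L i * α' i + Mu i * γ' i := by
    intro i
    rw [hm i, hL, hMu]
    have h0 := hmpos i
    have hne : α' i ≠ 0 := (hα'pos i).ne'
    field_simp
    ring
  -- splitting sums at N
  have hN1 : N - 1 + 1 = N := by omega
  have hsplit : ∀ f : ℕ → ℝ, ∑ k ∈ Finset.Icc 1 N, f k
      = (∑ k ∈ Finset.Icc 1 (N-1), f k) + f N := by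
    intro f
    have h := Finset.sum_Icc_succ_top (a := 1) (b := N-1) (by omega) f
    rw [hN1] at h
    exact h
  have hsum_ite : ∀ (j : ℕ) (c : ℝ), j ∈ Finset.Icc 1 N →
      ∑ k ∈ Finset.Icc 1 N, (if k = j then c else 0) = c := by
    intro j c hj
    rw [Finset.sum_ite_eq' (Finset.Icc 1 N) j (fun _ => c), if_pos hj]
  have hsum_ite_mul : ∀ (j : ℕ) (c : ℝ), j ∈ Finset.Icc 1 N →
      ∑ k ∈ Finset.Icc 1 N, (k:ℝ) * (if k = j then c else 0) = (j:ℝ) * c := by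
    intro j c hj
    have e : ∀ k ∈ Finset.Icc 1 N, (k:ℝ) * (if k = j then c else 0)
        = (if k = j then (j:ℝ) * c else 0) := by
      intro k _
      split_ifs with h
      · rw [h]
      · rw [mul_zero]
    rw [Finset.sum_congr rfl e, Finset.sum_ite_eq' (Finset.Icc 1 N) j (fun _ => (j:ℝ) * c),
      if_pos hj]
  have hsum_ite_div : ∀ (j : ℕ) (c : ℝ), j ∈ Finset.Icc 1 N →
      ∑ k ∈ Finset.Icc 1 N, (if k = j then c else 0) / (k:ℝ) = c / (j:ℝ) := by
    intro j c hj
    have e : ∀ k ∈ Finset.Icc 1 N, (if k = j then c else 0) / (k:ℝ)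
        = (if k = j then c / (j:ℝ) else 0) := by
      intro k _
      split_ifs with h
      · rw [h]
      · rw [zero_div]
    rw [Finset.sum_congr rfl e, Finset.sum_ite_eq' (Finset.Icc 1 N) j (fun _ => c / (j:ℝ)),
      if_pos hj]
  constructor
  · -- membership
    set p : Fin N → ℝ := fun i => ((m i:ℝ) + 1 - γ' i / α' i) * α' i with hp
    set q : Fin N → ℝ := fun i => (γ' i / α' i - (m i:ℝ)) * α' i with hq
    have hp0 : ∀ i, 0 ≤ p i := fun i => mul_nonneg (by linarith [hrm i]) (hα'pos i).le
    have hq0 : ∀ i, 0 ≤ q i := fun i => mul_nonneg (by linarith [hmr i]) (hα'pos i).le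
    have hqN : ∀ i, m i + 1 = N → q i = 0 := by
      intro i hiN
      have hc : ((m i : ℝ)) = (N:ℝ) - 1 := by
        have : ((m i + 1 : ℕ) : ℝ) = (N:ℝ) := by exact_mod_cast congrArg (Nat.cast : ℕ → ℝ) hiN
        push_cast at this; linarith
      have : γ' i / α' i = (m i : ℝ) := le_antisymm (by rw [hc]; exact hrN i) (hmr i)
      rw [hq]; simp only [this]; ring
    refine ⟨fun i k => (if k = m i then p i else 0) + (if k = m i + 1 then q i else 0)
        + (if k = N then δ else 0), ?_, ?_, ?_, ?_, ?_⟩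
    · intro i k _
      refine add_nonneg (add_nonneg ?_ ?_) ?_ <;> split <;>
        first | exact hp0 i | exact hq0 i | exact hδ0 | exact le_refl 0
    · intro i
      have hmem1 : m i ∈ Finset.Icc 1 N := Finset.mem_Icc.mpr ⟨hm1 i, by have := hmN i; omega⟩
      have hmem2 : m i + 1 ∈ Finset.Icc 1 N := Finset.mem_Icc.mpr ⟨by omega, hmN i⟩
      have hmem3 : N ∈ Finset.Icc 1 N := Finset.mem_Icc.mpr ⟨by omega, le_refl N⟩
      rw [Finset.sum_add_distrib, Finset.sum_add_distrib,
        hsum_ite (m i) (p i) hmem1, hsum_ite (m i + 1) (q i) hmem2, hsum_ite N δ hmem3,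
        hp, hq]
      have hne : α' i ≠ 0 := (hα'pos i).ne'
      have hαi : α i = α' i + δ := by rw [hα' i]; ring
      rw [hαi]
      field_simp
      ring
    · intro i
      have hmem1 : m i ∈ Finset.Icc 1 N := Finset.mem_Icc.mpr ⟨hm1 i, by have := hmN i; omega⟩
      have hmem2 : m i + 1 ∈ Finset.Icc 1 N := Finset.mem_Icc.mpr ⟨by omega, hmN i⟩
      have hmem3 : N ∈ Finset.Icc 1 N := Finset.mem_Icc.mpr ⟨by omega, le_refl N⟩
      have e1 : ∀ k ∈ Finset.Icc 1 N, (k:ℝ) * ((if k = m i then p i else 0)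
          + (if k = m i + 1 then q i else 0) + (if k = N then δ else 0))
          = (k:ℝ) * (if k = m i then p i else 0) + (k:ℝ) * (if k = m i + 1 then q i else 0)
          + (k:ℝ) * (if k = N then δ else 0) := fun k _ => by ring
      rw [Finset.sum_congr rfl e1, Finset.sum_add_distrib, Finset.sum_add_distrib,
        hsum_ite_mul (m i) (p i) hmem1, hsum_ite_mul (m i + 1) (q i) hmem2,
        hsum_ite_mul N δ hmem3]
      push_cast
      rw [hp, hq]
      have hne : α' i ≠ 0 := (hα'pos i).ne'
      have hγi : γ i = γ' i + (N:ℝ) * δ := by rw [hγ' i]; ring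
      rw [hγi]
      field_simp
      ring
    · intro i j
      have key : ∀ i : Fin N, (if N = m i then p i else 0) + (if N = m i + 1 then q i else 0)
          + (if N = N then δ else 0) = δ := by
        intro i
        have hne1 : N ≠ m i := by have := hmN i; omega
        by_cases hc : N = m i + 1
        · rw [if_neg hne1, if_pos hc, hqN i hc.symm, if_pos rfl]; ring
        · rw [if_neg hne1, if_neg hc, if_pos rfl]; ring
      exact (key i).trans (key j).symm
    · rw [Finset.sum_congr rfl (fun i _ => hcoeff i)]
      have erow : ∀ i : Fin N, ∑ k ∈ Finset.Icc 1 N,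
          ((if k = m i then p i else 0) + (if k = m i + 1 then q i else 0)
            + (if k = N then δ else 0)) / (k:ℝ)
          = L i * α' i + Mu i * γ' i + δ / N := by
        intro i
        have hmem1 : m i ∈ Finset.Icc 1 N := Finset.mem_Icc.mpr ⟨hm1 i, by have := hmN i; omega⟩
        have hmem2 : m i + 1 ∈ Finset.Icc 1 N := Finset.mem_Icc.mpr ⟨by omega, hmN i⟩
        have hmem3 : N ∈ Finset.Icc 1 N := Finset.mem_Icc.mpr ⟨by omega, le_refl N⟩
        have e1 : ∀ k ∈ Finset.Icc 1 N, ((if k = m i then p i else 0)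
            + (if k = m i + 1 then q i else 0) + (if k = N then δ else 0)) / (k:ℝ)
            = (if k = m i then p i else 0) / (k:ℝ) + (if k = m i + 1 then q i else 0) / (k:ℝ)
              + (if k = N then δ else 0) / (k:ℝ) := fun k _ => by ring
        rw [Finset.sum_congr rfl e1, Finset.sum_add_distrib, Finset.sum_add_distrib,
          hsum_ite_div (m i) (p i) hmem1, hsum_ite_div (m i + 1) (q i) hmem2,
          hsum_ite_div N δ hmem3]
        push_cast
        rw [hp, hq, hL, hMu]
        have hne : α' i ≠ 0 := (hα'pos i).ne'
        have h0 := hmpos i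
        field_simp
        ring
      have hconst : ∑ _i : Fin N, (δ/(N:ℝ)) = δ := by
        rw [Finset.sum_const, Finset.card_univ, Fintype.card_fin, nsmul_eq_mul]
        field_simp
      have hfin : ∑ i : Fin N, (L i * α' i + Mu i * γ' i + δ/(N:ℝ))
          = (∑ i : Fin N, (L i * α' i + Mu i * γ' i)) + δ := by
        rw [Finset.sum_add_distrib, hconst]
      rw [Finset.sum_congr rfl (fun i _ => erow i), hfin]
      ring
  · -- lower bound
    rintro v ⟨a, ha0, haα, haγ, haE, hv⟩
    set i0 : Fin N := ⟨0, by omega⟩ with hi0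
    set t : ℝ := a i0 N with ht
    have hmemN : N ∈ Finset.Icc 1 N := Finset.mem_Icc.mpr ⟨by omega, le_refl N⟩
    have ht0 : 0 ≤ t := ha0 i0 N hmemN
    have htj : ∀ j, a j N = t := fun j => haE j i0
    have hsum' : ∀ i, ∑ k ∈ Finset.Icc 1 (N-1), a i k = α i - t := by
      intro i
      have h : (∑ k ∈ Finset.Icc 1 (N-1), a i k) + a i N = α i :=
        (hsplit (fun k => a i k)).symm.trans (haα i)
      have h2 := htj i
      linarith
    have hwsum' : ∀ i, ∑ k ∈ Finset.Icc 1 (N-1), (k:ℝ) * a i k = γ i - (N:ℝ) * t := by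
      intro i
      have h : (∑ k ∈ Finset.Icc 1 (N-1), (k:ℝ) * a i k) + (N:ℝ) * a i N = γ i :=
        (hsplit (fun k => (k:ℝ) * a i k)).symm.trans (haγ i)
      have h2 := htj i
      rw [h2] at h
      linarith
    have htδ : δ ≤ t := by
      rw [hδ]
      apply max_le ht0
      apply Finset.sup'_le
      intro j _
      have hb : ∑ k ∈ Finset.Icc 1 (N-1), (k:ℝ) * a j k
          ≤ ∑ k ∈ Finset.Icc 1 (N-1), ((N:ℝ)-1) * a j k := by
        apply Finset.sum_le_sum
        intro k hk
        obtain ⟨hk1, hk2⟩ := Finset.mem_Icc.mp hk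
        have hkN : (k:ℝ) ≤ (N:ℝ) - 1 := by
          have : (k:ℝ) ≤ ((N-1 : ℕ):ℝ) := by exact_mod_cast hk2
          rw [Nat.cast_sub (by omega)] at this
          simpa using this
        exact mul_le_mul_of_nonneg_right hkN
          (ha0 j k (Finset.mem_Icc.mpr ⟨hk1, by omega⟩))
      rw [hwsum' j, ← Finset.mul_sum, hsum' j] at hb
      nlinarith
    have hrow : ∀ i, L i * (α i - t) + Mu i * (γ i - (N:ℝ) * t) + t / N
        ≤ ∑ k ∈ Finset.Icc 1 N, a i k / (k:ℝ) := by
      intro i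
      have hs : ∑ k ∈ Finset.Icc 1 N, a i k / (k:ℝ)
          = (∑ k ∈ Finset.Icc 1 (N-1), a i k / (k:ℝ)) + a i N / (N:ℝ) :=
        hsplit (fun k => a i k / (k:ℝ))
      rw [hs, htj i]
      have hstep : ∑ k ∈ Finset.Icc 1 (N-1), (L i + Mu i * k) * a i k
          ≤ ∑ k ∈ Finset.Icc 1 (N-1), a i k / (k:ℝ) := by
        apply Finset.sum_le_sum
        intro k hk
        obtain ⟨hk1, hk2⟩ := Finset.mem_Icc.mp hk
        have hkey := key_ineq (m i) k (hm1 i) hk1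
        have ha := ha0 i k (Finset.mem_Icc.mpr ⟨hk1, by omega⟩)
        have hk0 : (0:ℝ) < k := by exact_mod_cast hk1
        calc (L i + Mu i * k) * a i k ≤ (1/(k:ℝ)) * a i k := by
              apply mul_le_mul_of_nonneg_right _ ha
              rw [hL, hMu]; exact hkey
          _ = a i k / (k:ℝ) := by ring
      have heq : ∑ k ∈ Finset.Icc 1 (N-1), (L i + Mu i * k) * a i k
          = L i * (α i - t) + Mu i * (γ i - (N:ℝ) * t) := by
        rw [← hsum' i, ← hwsum' i, Finset.mul_sum, Finset.mul_sum, ← Finset.sum_add_distrib]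
        exact Finset.sum_congr rfl (fun k _ => by ring)
      rw [← heq]
      have : t / (N:ℝ) = t / (N:ℝ) := rfl
      linarith [hstep]
    have hterm : ∀ i : Fin N, (1 / chi (γ' i / α' i) -
        (γ' i / α' i - chi (γ' i / α' i)) /
          ((1 + chi (γ' i / α' i)) * chi (γ' i / α' i))) * α' i + δ / N
        ≤ ∑ k ∈ Finset.Icc 1 N, a i k / (k:ℝ) := by
      intro i
      have hkeyN := key_ineq (m i) N (hm1 i) (by omega)
      have hc : L i + Mu i * N ≤ 1 / N := by rw [hL, hMu]; exact hkeyN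
      calc (1 / chi (γ' i / α' i) - (γ' i / α' i - chi (γ' i / α' i)) /
            ((1 + chi (γ' i / α' i)) * chi (γ' i / α' i))) * α' i + δ / N
          = L i * (α i - δ) + Mu i * (γ i - (N:ℝ) * δ) + δ / N := by
            rw [hcoeff i, hα' i, hγ' i]
        _ = L i * α i + Mu i * γ i + δ * (1/N - (L i + Mu i * N)) := by ring
        _ ≤ L i * α i + Mu i * γ i + t * (1/N - (L i + Mu i * N)) := by
            have := mul_le_mul_of_nonneg_right htδ (by linarith : 0 ≤ 1/(N:ℝ) - (L i + Mu i * N))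
            linarith
        _ = L i * (α i - t) + Mu i * (γ i - (N:ℝ) * t) + t / N := by ring
        _ ≤ _ := hrow i
    rw [hv]
    calc δ + ∑ i : Fin N, (1 / chi (γ' i / α' i) -
          (γ' i / α' i - chi (γ' i / α' i)) /
            ((1 + chi (γ' i / α' i)) * chi (γ' i / α' i))) * α' i
        = ∑ i : Fin N, ((1 / chi (γ' i / α' i) -
            (γ' i / α' i - chi (γ' i / α' i)) /
              ((1 + chi (γ' i / α' i)) * chi (γ' i / α' i))) * α' i + δ / N) := by
          have hconst : ∑ _i : Fin N, (δ/(N:ℝ)) = δ := by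
            rw [Finset.sum_const, Finset.card_univ, Fintype.card_fin, nsmul_eq_mul]
            field_simp
          rw [Finset.sum_add_distrib, hconst]
          ring
      _ ≤ ∑ i : Fin N, ∑ k ∈ Finset.Icc 1 N, a i k / (k:ℝ) :=
          Finset.sum_le_sum (fun i _ => hterm i)
end
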